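/- For every i = 0, …, n one has the identity (α_{2i}/φ_{2i}) · S'_{2i} − (φ_{2i+1}/α_{2i+1}) · S'_{2i+2} = (1 − β'₀/q) · (1 + α_{2i}/φ_{2i}). -/

import Mathlib

open Finset

set_option maxHeartbeats 1000000

private lemma pair_prod {M : Type*} [CommMonoid M] (h : ℕ → M) (m : ℕ) :
    ∏ k ∈ range m, (h (2*k) * h (2*k+1)) = ∏ j ∈ range (2*m), h j := by
  induction m with
  | zero => simp
  | succ m ih =>
    rw [prod_range_succ, ih, show 2*(m+1) = 2*m+1+1 from by ring,
      prod_range_succ, prod_range_succ, mul_assoc]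

private lemma cast_prod {M : Type*} [CommMonoid M] (N : ℕ) [NeZero N]
    (h : ZMod N → M) : ∏ j ∈ range N, h (j : ZMod N) = ∏ y : ZMod N, h y := by
  refine prod_nbij (fun j => (j : ZMod N)) (fun a _ => mem_univ _) ?_ ?_ (fun _ _ => rfl)
  · intro a ha b hb hab
    simp only [Set.mem_setOf_eq, coe_range, Set.mem_Iio] at ha hb
    have := congrArg ZMod.val hab
    rwa [ZMod.val_natCast_of_lt ha, ZMod.val_natCast_of_lt hb] at this
  · intro y _
    exact ⟨y.val, by simpa [coe_range] using y.val_lt, ZMod.natCast_rightInverse y⟩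

private lemma cycle_prod {M : Type*} [CommMonoid M] (n : ℕ)
    (g : ZMod (2*n+2) → M) (x : ZMod (2*n+2)) :
    ∏ k ∈ range (n+1), (g (x + 2*k) * g (x + 2*k + 1)) = ∏ y : ZMod (2*n+2), g y := by
  haveI : NeZero (2*n+2) := ⟨by omega⟩
  calc ∏ k ∈ range (n+1), (g (x + 2*k) * g (x + 2*k + 1))
      = ∏ k ∈ range (n+1), ((fun j : ℕ => g (x + j)) (2*k) * (fun j : ℕ => g (x + j)) (2*k+1)) := by
        refine prod_congr rfl fun k _ => ?_
        push_cast
        ring_nf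
    _ = ∏ j ∈ range (2*(n+1)), (fun j : ℕ => g (x + j)) j := pair_prod (fun j : ℕ => g (x + j)) (n+1)
    _ = ∏ j ∈ range (2*n+2), g (x + (j : ZMod (2*n+2))) := by rw [show 2*(n+1) = 2*n+2 from by ring]
    _ = ∏ y : ZMod (2*n+2), g (x + y) := cast_prod (2*n+2) (fun y => g (x + y))
    _ = ∏ y : ZMod (2*n+2), g y := Equiv.prod_comp (Equiv.addLeft x) g

/-- `S'_x` (the same formula covers both even and odd indices `x` of `ZMod (2n+2)`):
for `x = 2i` this is `S'_{2i}` and for `x = 2i+1` this is `S'_{2i+1}`. -/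
noncomputable def Sp (n : ℕ) {K : Type*} [Field K] (α φ : ZMod (2*n+2) → K)
    (x : ZMod (2*n+2)) : K :=
  ∑ j ∈ range (n+1),
    (∏ k ∈ range j, (φ (x + 2*k) / α (x + 2*k)) * (φ (x + 2*k + 1) / α (x + 2*k + 1)))
      * (1 + φ (x + 2*j) / α (x + 2*j))

/-- `(α_{2i}/φ_{2i}) S'_{2i} - (φ_{2i+1}/α_{2i+1}) S'_{2i+2}
  = (1 - β'₀/q)(1 + α_{2i}/φ_{2i})` for `i = 0, …, n`. -/
theorem stmt4 (n : ℕ) (hn : 1 ≤ n) (K : Type*) [Field K]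
    (α φ : ZMod (2*n+2) → K) (hα : ∀ i, α i ≠ 0) (hφ : ∀ i, φ i ≠ 0)
    (q β'₀ : K)
    (hq : q = ∏ i ∈ range (2*n+2), α (i : ZMod (2*n+2)))
    (hβ'₀ : β'₀ = ∏ i ∈ range (n+1), φ (2*i) * φ (2*i+1)) :
    ∀ i : ℕ, i ≤ n →
      (α (2*i) / φ (2*i)) * Sp n α φ (2*i) - (φ (2*i+1) / α (2*i+1)) * Sp n α φ (2*i+2)
        = (1 - β'₀ / q) * (1 + α (2*i) / φ (2*i)) := by
  intro i _
  haveI : NeZero (2*n+2) := ⟨by omega⟩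
  set x : ZMod (2*n+2) := 2*(i : ZMod (2*n+2)) with hx
  -- products over the full cycle
  have hqx : ∏ k ∈ range (n+1), (α (x + 2*k) * α (x + 2*k + 1)) = q := by
    rw [cycle_prod, hq, cast_prod]
  have hβx : ∏ k ∈ range (n+1), (φ (x + 2*k) * φ (x + 2*k + 1)) = β'₀ := by
    rw [cycle_prod, hβ'₀]
    rw [show (∏ i ∈ range (n+1), φ (2*(i:ZMod (2*n+2))) * φ (2*i+1))
        = ∏ k ∈ range (n+1), (φ ((0:ZMod (2*n+2)) + 2*k) * φ (0 + 2*k + 1)) by simp]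
    rw [cycle_prod]
  have hrprod : ∏ k ∈ range (n+1),
      ((φ (x + 2*k) / α (x + 2*k)) * (φ (x + 2*k + 1) / α (x + 2*k + 1))) = β'₀ / q := by
    rw [← hqx, ← hβx, ← prod_div_distrib]
    exact prod_congr rfl fun k _ => div_mul_div_comm _ _ _ _
  -- the telescoping function
  set F : ℕ → K := fun j => (α x / φ x) *
      ((∏ k ∈ range j, (φ (x + 2*k) / α (x + 2*k)) * (φ (x + 2*k + 1) / α (x + 2*k + 1)))
        * (1 + φ (x + 2*j) / α (x + 2*j))) with hF
  have h1 : (α x / φ x) * Sp n α φ x = ∑ j ∈ range (n+1), F j := by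
    rw [Sp, mul_sum]
  have h2 : (φ (x+1) / α (x+1)) * Sp n α φ (x+2) = ∑ j ∈ range (n+1), F (j+1) := by
    rw [Sp, mul_sum]
    refine sum_congr rfl fun j _ => ?_
    have hidx : ∀ k : ℕ, x + 2*((k:ZMod (2*n+2))+1) = (x+2) + 2*k := fun k => by ring
    have hidx' : ∀ k : ℕ, x + 2*((k:ZMod (2*n+2))+1) + 1 = (x+2) + 2*k + 1 := fun k => by ring
    have key : ∀ B C : K, (φ (x+1) / α (x+1)) * (B * C)
        = (α x / φ x) * ((B * ((φ x / α x) * (φ (x+1) / α (x+1)))) * C) := by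
      intro B C
      have h1 : α x ≠ 0 := hα x
      have h2 : φ x ≠ 0 := hφ x
      have h3 : α (x+1) ≠ 0 := hα _
      field_simp
    simp only [hF, Nat.cast_add, Nat.cast_one, Nat.cast_zero, mul_zero, add_zero,
      prod_range_succ', hidx, hidx']
    exact key _ _
  have h3 : ∑ j ∈ range (n+1), F j - ∑ j ∈ range (n+1), F (j+1) = F 0 - F (n+1) := by
    rw [← sum_sub_distrib]
    exact sum_range_sub' F (n+1)
  have key2 : ∀ t : K, (α x / φ x) * (t * (1 + φ x / α x)) = t * (1 + α x / φ x) := by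
    intro t
    have h1 : α x ≠ 0 := hα x
    have h2 : φ x ≠ 0 := hφ x
    field_simp
    ring
  have hF0 : F 0 = 1 + α x / φ x := by
    have := key2 1
    simp only [hF, Nat.cast_zero, mul_zero, add_zero, prod_range_zero]
    rw [key2 1, one_mul]
  have hFn : F (n+1) = (β'₀ / q) * (1 + α x / φ x) := by
    have hz : x + 2*(((n:ℕ):ZMod (2*n+2))+1) = x := by
      have : ((2*n+2 : ℕ) : ZMod (2*n+2)) = 0 := ZMod.natCast_self _
      push_cast at this
      rw [show (2:ZMod (2*n+2))*((n:ZMod (2*n+2))+1) = 2*n+2 from by ring, this, add_zero]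
    simp only [hF, Nat.cast_add, Nat.cast_one, hz, hrprod]
    rw [key2 (β'₀ / q)]
  calc (α x / φ x) * Sp n α φ x - (φ (x+1) / α (x+1)) * Sp n α φ (x+2)
      = F 0 - F (n+1) := by rw [h1, h2, h3]
    _ = (1 - β'₀ / q) * (1 + α x / φ x) := by rw [hF0, hFn]; ring
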